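/- Every endomorphism φ of F₂ lying in the submonoid of End(F₂) generated by T̂₁ and T̂₂ (i.e. every finite composition of copies of T̂₁ and T̂₂) sends both generators a and b to positive words, fixes the commutator κ (φ(κ) = κ), and is an automorphism of F₂. -/

import Mathlib

/-- The free group on two generators. -/
abbrev F2 := FreeGroup (Fin 2)

/-- The first generator `a` of `F₂`. -/
def a : F2 := FreeGroup.of 0

/-- The second generator `b` of `F₂`. -/
def b : F2 := FreeGroup.of 1

/-- The commutator `κ = a·b·a⁻¹·b⁻¹`. -/
def kappa : F2 := a * b * a⁻¹ * b⁻¹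

/-- An element of `F₂` is a positive word if it lies in the submonoid generated by the
generators `a` and `b`. -/
def IsPositiveWord (x : F2) : Prop := x ∈ Submonoid.closure ({a, b} : Set F2)

/-- The endomorphism `T̂₁` of `F₂` determined by `a ↦ a·b`, `b ↦ b`. -/
def T1hat : Monoid.End F2 := FreeGroup.lift fun i => if i = 0 then a * b else b

/-- The endomorphism `T̂₂` of `F₂` determined by `a ↦ a`, `b ↦ b·a`. -/
def T2hat : Monoid.End F2 := FreeGroup.lift fun i => if i = 0 then a else b * a

lemma endCoe (f : Monoid.End F2) (x : F2) :
    f x = (show F2 →* F2 from f) x := rfl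

lemma liftE (f : Fin 2 → F2) (x : F2) :
    @DFunLike.coe (Monoid.End F2) F2 (fun _ => F2) _ (FreeGroup.lift f) x =
      @DFunLike.coe (F2 →* F2) F2 (fun _ => F2) _ (FreeGroup.lift f) x := rfl

lemma mulE (f g : Monoid.End F2) (x : F2) : (f * g) x = f (g x) := rfl
lemma oneE (x : F2) : (1 : Monoid.End F2) x = x := rfl

lemma T1_a : T1hat a = a * b := by simp [T1hat, a, endCoe, liftE, FreeGroup.lift_apply_of, mul_inv_cancel_right, inv_mul_cancel_right]
lemma T1_b : T1hat b = b := by simp [T1hat, b, endCoe, liftE, FreeGroup.lift_apply_of, mul_inv_cancel_right, inv_mul_cancel_right]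
lemma T2_a : T2hat a = a := by simp [T2hat, a, endCoe, liftE, FreeGroup.lift_apply_of, mul_inv_cancel_right, inv_mul_cancel_right]
lemma T2_b : T2hat b = b * a := by simp [T2hat, b, endCoe, liftE, FreeGroup.lift_apply_of, mul_inv_cancel_right, inv_mul_cancel_right]

/-- Inverse of T1hat. -/
def S1 : Monoid.End F2 := FreeGroup.lift fun i => if i = 0 then a * b⁻¹ else b

/-- Inverse of T2hat. -/
def S2 : Monoid.End F2 := FreeGroup.lift fun i => if i = 0 then a else b * a⁻¹

lemma pos_a : IsPositiveWord a := Submonoid.subset_closure (by simp)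
lemma pos_b : IsPositiveWord b := Submonoid.subset_closure (by simp)

lemma pos_map (ψ : Monoid.End F2) (ha : IsPositiveWord (ψ a)) (hb : IsPositiveWord (ψ b))
    {x : F2} (hx : IsPositiveWord x) : IsPositiveWord (ψ x) := by
  induction hx using Submonoid.closure_induction with
  | mem y hy =>
    rcases hy with h | h
    · subst h; exact ha
    · simp at h; subst h; exact hb
  | one => rw [map_one]; exact one_mem (Submonoid.closure ({a, b} : Set F2))
  | mul y z _ _ hy hz => rw [map_mul]; exact mul_mem hy hz

lemma end_eq_of (f g : Monoid.End F2) (h : ∀ i, f (FreeGroup.of i) = g (FreeGroup.of i)) :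
    f = g := by
  have : (f : F2 →* F2) = (g : F2 →* F2) := FreeGroup.ext_hom _ _ h
  exact this

lemma T1_bij : Function.Bijective T1hat := by
  rw [Function.bijective_iff_has_inverse]
  refine ⟨S1, fun x => ?_, fun x => ?_⟩
  · have h : S1 * T1hat = 1 := by
      apply end_eq_of; intro i
      fin_cases i <;>
        (simp only [mulE, oneE]; simp [T1hat, S1, a, b, endCoe, liftE, FreeGroup.lift_apply_of, map_mul, map_inv, mul_inv_cancel_right, inv_mul_cancel_right])
    exact congrArg (fun ψ : Monoid.End F2 => ψ x) h
  · have h : T1hat * S1 = 1 := by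
      apply end_eq_of; intro i
      fin_cases i <;>
        (simp only [mulE, oneE]; simp [T1hat, S1, a, b, endCoe, liftE, FreeGroup.lift_apply_of, map_mul, map_inv, mul_inv_cancel_right, inv_mul_cancel_right])
    exact congrArg (fun ψ : Monoid.End F2 => ψ x) h

lemma T2_bij : Function.Bijective T2hat := by
  rw [Function.bijective_iff_has_inverse]
  refine ⟨S2, fun x => ?_, fun x => ?_⟩
  · have h : S2 * T2hat = 1 := by
      apply end_eq_of; intro i
      fin_cases i <;>
        (simp only [mulE, oneE]; simp [T2hat, S2, a, b, endCoe, liftE, FreeGroup.lift_apply_of, map_mul, map_inv, mul_inv_cancel_right, inv_mul_cancel_right])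
    exact congrArg (fun ψ : Monoid.End F2 => ψ x) h
  · have h : T2hat * S2 = 1 := by
      apply end_eq_of; intro i
      fin_cases i <;>
        (simp only [mulE, oneE]; simp [T2hat, S2, a, b, endCoe, liftE, FreeGroup.lift_apply_of, map_mul, map_inv, mul_inv_cancel_right, inv_mul_cancel_right])
    exact congrArg (fun ψ : Monoid.End F2 => ψ x) h

lemma T1_kappa : T1hat kappa = kappa := by
  simp only [kappa, map_mul, map_inv, T1_a, T1_b]
  group

lemma T2_kappa : T2hat kappa = kappa := by
  simp only [kappa, map_mul, map_inv, T2_a, T2_b]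
  group

/-- Every endomorphism of `F₂` lying in the submonoid of `End(F₂)` generated by `T̂₁` and
`T̂₂` sends both generators to positive words, fixes the commutator `κ` exactly, and is an
automorphism of `F₂`. -/
theorem mem_closure_T1hat_T2hat_properties (φ : Monoid.End F2)
    (hφ : φ ∈ Submonoid.closure ({T1hat, T2hat} : Set (Monoid.End F2))) :
    IsPositiveWord (φ a) ∧ IsPositiveWord (φ b) ∧ φ kappa = kappa ∧
      Function.Bijective φ := by
  induction hφ using Submonoid.closure_induction with
  | mem ψ hψ =>
    rcases hψ with h | h
    · subst h
      exact ⟨by rw [T1_a]; exact mul_mem pos_a pos_b, by rw [T1_b]; exact pos_b,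
        T1_kappa, T1_bij⟩
    · simp at h; subst h
      exact ⟨by rw [T2_a]; exact pos_a, by rw [T2_b]; exact mul_mem pos_b pos_a,
        T2_kappa, T2_bij⟩
  | one => exact ⟨pos_a, pos_b, rfl, Function.bijective_id⟩
  | mul ψ χ _ _ hψ hχ =>
    obtain ⟨ha1, hb1, hk1, hbij1⟩ := hψ
    obtain ⟨ha2, hb2, hk2, hbij2⟩ := hχ
    have hcomp : ∀ x : F2, (ψ * χ) x = ψ (χ x) := fun _ => rfl
    refine ⟨?_, ?_, ?_, ?_⟩
    · rw [hcomp]; exact pos_map ψ ha1 hb1 ha2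
    · rw [hcomp]; exact pos_map ψ ha1 hb1 hb2
    · rw [hcomp, hk2, hk1]
    · exact hbij1.comp hbij2
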